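/- If a tuple of transpositions in S_d generates a transitive subgroup of S_d and has product the identity, then the tuple has at least 2(d-1) entries. -/

import Mathlib

open Equiv Equiv.Perm Relation Function

namespace LGT

variable {d : ℕ}

/-- The relation relating exactly the pair `x, y` (both ways). -/
def pr (x y a b : Fin d) : Prop := (a = x ∧ b = y) ∨ (a = y ∧ b = x)

lemma eqvGen_le {α : Type*} {r p : α → α → Prop} (h : ∀ a b, r a b → EqvGen p a b) :
    ∀ {a b : α}, EqvGen r a b → EqvGen p a b := by
  intro a b hab
  induction hab with
  | rel a b h' => exact h a b h'
  | refl a => exact EqvGen.refl a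
  | symm a b _ ih => exact EqvGen.symm _ _ ih
  | trans a b c _ _ ih1 ih2 => exact EqvGen.trans _ _ _ ih1 ih2

/-- number of classes of a setoid on `Fin d`. -/
noncomputable def nc (s : Setoid (Fin d)) : ℕ := Nat.card (Quotient s)

lemma nc_le_of_le {s t : Setoid (Fin d)} (h : ∀ a b, s a b → t a b) : nc t ≤ nc s := by
  have hsurj : Surjective (Quotient.map' (s₁ := s) (s₂ := t) id (fun a b hab => h a b hab)) := by
    intro q
    obtain ⟨a, rfl⟩ := q.exists_rep
    exact ⟨Quotient.mk s a, rfl⟩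
  exact Nat.card_le_card_of_surjective _ hsurj

lemma nc_lt {s t : Setoid (Fin d)} (h : ∀ a b, s a b → t a b) {x y : Fin d}
    (hxy : t x y) (hnxy : ¬ s x y) : nc t < nc s := by
  by_contra hle
  push_neg at hle
  have hsurj : Surjective (Quotient.map' (s₁ := s) (s₂ := t) id (fun a b hab => h a b hab)) := by
    intro q
    obtain ⟨a, rfl⟩ := q.exists_rep
    exact ⟨Quotient.mk s a, rfl⟩
  have hbij := hsurj.bijective_of_nat_card_le hle
  have : Quotient.mk s x = Quotient.mk s y := by
    apply hbij.injective
    exact Quotient.sound hxy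
  exact hnxy (Quotient.exact this)

lemma eqvGen_sup_pair_iff (s : Setoid (Fin d)) (x y a b : Fin d) :
    EqvGen (fun a b => s a b ∨ pr x y a b) a b ↔
      s a b ∨ (s a x ∧ s y b) ∨ (s a y ∧ s x b) := by
  have e := s.iseqv
  constructor
  · intro h
    induction h with
    | rel a b h' =>
      rcases h' with h' | ⟨rfl, rfl⟩ | ⟨rfl, rfl⟩
      · exact Or.inl h'
      · exact Or.inr (Or.inl ⟨e.refl _, e.refl _⟩)
      · exact Or.inr (Or.inr ⟨e.refl _, e.refl _⟩)
    | refl a => exact Or.inl (e.refl a)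
    | symm a b _ ih =>
      rcases ih with h' | ⟨h1, h2⟩ | ⟨h1, h2⟩
      · exact Or.inl (e.symm h')
      · exact Or.inr (Or.inr ⟨e.symm h2, e.symm h1⟩)
      · exact Or.inr (Or.inl ⟨e.symm h2, e.symm h1⟩)
    | trans a b c _ _ ih1 ih2 =>
      rcases ih1 with h' | ⟨h1, h2⟩ | ⟨h1, h2⟩ <;>
        rcases ih2 with g' | ⟨g1, g2⟩ | ⟨g1, g2⟩
      · exact Or.inl (e.trans h' g')
      · exact Or.inr (Or.inl ⟨e.trans h' g1, g2⟩)
      · exact Or.inr (Or.inr ⟨e.trans h' g1, g2⟩)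
      · exact Or.inr (Or.inl ⟨h1, e.trans h2 g'⟩)
      · exact Or.inl (e.trans (e.trans h1 (e.symm (e.trans h2 g1))) g2)
      · exact Or.inl (e.trans h1 g2)
      · exact Or.inr (Or.inr ⟨h1, e.trans h2 g'⟩)
      · exact Or.inl (e.trans h1 g2)
      · exact Or.inl (e.trans (e.trans h1 (e.symm (e.trans h2 g1))) g2)
  · intro h
    rcases h with h' | ⟨h1, h2⟩ | ⟨h1, h2⟩
    · exact EqvGen.rel _ _ (Or.inl h')
    · exact EqvGen.trans _ _ _ (EqvGen.rel _ _ (Or.inl h1))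
        (EqvGen.trans _ _ _ (EqvGen.rel _ _ (Or.inr (Or.inl ⟨rfl, rfl⟩)))
          (EqvGen.rel _ _ (Or.inl h2)))
    · exact EqvGen.trans _ _ _ (EqvGen.rel _ _ (Or.inl h1))
        (EqvGen.trans _ _ _ (EqvGen.rel _ _ (Or.inr (Or.inr ⟨rfl, rfl⟩)))
          (EqvGen.rel _ _ (Or.inl h2)))

lemma nc_le_succ (s : Setoid (Fin d)) (x y : Fin d) :
    nc s ≤ nc (EqvGen.setoid (fun a b => s a b ∨ pr x y a b)) + 1 := by
  classical
  set t := EqvGen.setoid (fun a b => s a b ∨ pr x y a b) with ht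
  have hle : ∀ a b, s a b → t a b := fun a b hab => EqvGen.rel _ _ (Or.inl hab)
  set π : Quotient s → Quotient t := Quotient.map' id (fun a b hab => hle a b hab) with hπ
  set f : Quotient s → Option (Quotient t) :=
    fun q => if q = Quotient.mk s x then none else some (π q) with hf
  have hinj : Injective f := by
    intro q1 q2 he
    obtain ⟨a, rfl⟩ := q1.exists_rep
    obtain ⟨b, rfl⟩ := q2.exists_rep
    simp only [hf] at he
    by_cases h1 : (Quotient.mk s a : Quotient s) = Quotient.mk s x <;>
      by_cases h2 : (Quotient.mk s b : Quotient s) = Quotient.mk s x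
    · rw [h1, h2]
    · rw [if_pos h1, if_neg h2] at he
      exact absurd he (by simp)
    · rw [if_neg h1, if_pos h2] at he
      exact absurd he (by simp)
    · rw [if_neg h1, if_neg h2, Option.some_inj] at he
      have htab : t a b := Quotient.exact (show (Quotient.mk t a : Quotient t) = Quotient.mk t b from he)
      have := (eqvGen_sup_pair_iff s x y a b).1 htab
      rcases this with h' | ⟨g1, g2⟩ | ⟨g1, g2⟩
      · exact Quotient.sound h'
      · exact absurd (Quotient.sound g1) h1
      · exact absurd (Quotient.sound (s.iseqv.symm g2)) h2
  calc nc s ≤ Nat.card (Option (Quotient t)) := Nat.card_le_card_of_injective f hinj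
    _ = nc t + 1 := Finite.card_option

/-- The same-cycle setoid of a permutation. -/
def cycS (σ : Perm (Fin d)) : Setoid (Fin d) :=
  ⟨σ.SameCycle, ⟨fun a => SameCycle.refl σ a, SameCycle.symm, SameCycle.trans⟩⟩

lemma sameCycle_swap_mul_le (σ : Perm (Fin d)) (x y a b : Fin d)
    (h : (swap x y * σ).SameCycle a b) :
    EqvGen (fun u v => σ.SameCycle u v ∨ pr x y u v) a b := by
  have key : ∀ n : ℕ,
      EqvGen (fun u v => σ.SameCycle u v ∨ pr x y u v) a (((swap x y * σ) ^ n) a) := by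
    intro n
    induction n with
    | zero => exact EqvGen.refl a
    | succ n ih =>
      set c := ((swap x y * σ) ^ n) a with hc
      have hstep : ((swap x y * σ) ^ (n + 1)) a = swap x y (σ c) := by
        rw [pow_succ', mul_apply, mul_apply]
      have h2 : EqvGen (fun u v => σ.SameCycle u v ∨ pr x y u v) c (σ c) :=
        EqvGen.rel _ _ (Or.inl ⟨1, by simp⟩)
      have h3 : EqvGen (fun u v => σ.SameCycle u v ∨ pr x y u v) (σ c) (swap x y (σ c)) := by
        rcases eq_or_ne (σ c) x with hx | hx
        · rw [hx, swap_apply_left]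
          exact EqvGen.rel _ _ (Or.inr (Or.inl ⟨rfl, rfl⟩))
        · rcases eq_or_ne (σ c) y with hy | hy
          · rw [hy, swap_apply_right]
            exact EqvGen.rel _ _ (Or.inr (Or.inr ⟨rfl, rfl⟩))
          · rw [swap_apply_of_ne_of_ne hx hy]
            exact EqvGen.refl _
      rw [hstep]
      exact EqvGen.trans _ _ _ ih (EqvGen.trans _ _ _ h2 h3)
  obtain ⟨n, -, hn⟩ := h.exists_pow_eq'
  rw [← hn]
  exact key n

lemma sameCycle_of_swap_mul (σ : Perm (Fin d)) (x y : Fin d) (hxy : σ.SameCycle x y)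
    {a b : Fin d} (h : (swap x y * σ).SameCycle a b) : σ.SameCycle a b := by
  have h1 := sameCycle_swap_mul_le σ x y a b h
  have h2 : EqvGen σ.SameCycle a b := by
    refine EqvGen.mono ?_ _ _ h1
    rintro u v (h' | ⟨rfl, rfl⟩ | ⟨rfl, rfl⟩)
    · exact h'
    · exact hxy
    · exact hxy.symm
  rwa [Equivalence.eqvGen_eq ⟨fun a => SameCycle.refl σ a, SameCycle.symm, SameCycle.trans⟩]
    at h2

lemma sameCycle_swap_mul_of_not (σ : Perm (Fin d)) {x y : Fin d}
    (h : ¬ σ.SameCycle x y) : (swap x y * σ).SameCycle x y := by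
  classical
  have hex : ∃ k, 0 < k ∧ (σ ^ k) x = x :=
    ⟨orderOf σ, orderOf_pos σ, by simp [pow_orderOf_eq_one]⟩
  obtain ⟨hmpos, hmfix⟩ := Nat.find_spec hex
  have hmin : ∀ k, 0 < k → k < Nat.find hex → (σ ^ k) x ≠ x := fun k hk hkm he =>
    Nat.find_min hex hkm ⟨hk, he⟩
  have key : ∀ k, k < Nat.find hex → ((swap x y * σ) ^ k) x = (σ ^ k) x := by
    intro k
    induction k with
    | zero => simp
    | succ k ih =>
      intro hk1
      have hk : k < Nat.find hex := Nat.lt_of_succ_lt hk1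
      have hne1 : (σ ^ (k + 1)) x ≠ x := hmin (k + 1) (Nat.succ_pos k) hk1
      have hne2 : (σ ^ (k + 1)) x ≠ y := fun he =>
        h ⟨((k + 1 : ℕ) : ℤ), by rw [zpow_natCast]; exact he⟩
      have e1 : ((swap x y * σ) ^ (k + 1)) x = swap x y (σ ((σ ^ k) x)) := by
        rw [pow_succ', mul_apply, mul_apply, ih hk]
      have e2 : (σ ^ (k + 1)) x = σ ((σ ^ k) x) := by rw [pow_succ', mul_apply]
      rw [e1, ← e2, swap_apply_of_ne_of_ne hne1 hne2]
  obtain ⟨m', hm'⟩ : ∃ m', Nat.find hex = m' + 1 :=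
    ⟨Nat.find hex - 1, (Nat.succ_pred_eq_of_pos hmpos).symm⟩
  have hfin : ((swap x y * σ) ^ (m' + 1)) x = y := by
    have e1 : ((swap x y * σ) ^ (m' + 1)) x = swap x y (σ ((σ ^ m') x)) := by
      rw [pow_succ', mul_apply, mul_apply, key m' (by omega)]
    have e2 : (σ ^ (m' + 1)) x = σ ((σ ^ m') x) := by rw [pow_succ', mul_apply]
    rw [e1, ← e2, ← hm', hmfix, swap_apply_left]
  exact ⟨((m' + 1 : ℕ) : ℤ), by rw [zpow_natCast]; exact hfin⟩

lemma sameCycle_mono_of_not (σ : Perm (Fin d)) {x y : Fin d}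
    (h : ¬ σ.SameCycle x y) {a b : Fin d} (hab : σ.SameCycle a b) :
    (swap x y * σ).SameCycle a b := by
  have h3 := sameCycle_swap_mul_of_not σ h
  have hσ : swap x y * (swap x y * σ) = σ := by
    rw [← mul_assoc, swap_mul_self, one_mul]
  refine sameCycle_of_swap_mul (swap x y * σ) x y h3 ?_
  rwa [hσ]

lemma cyc_le_succ (σ : Perm (Fin d)) (x y : Fin d) :
    nc (cycS (swap x y * σ)) ≤ nc (cycS σ) + 1 := by
  have hσ : swap x y * (swap x y * σ) = σ := by
    rw [← mul_assoc, swap_mul_self, one_mul]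
  calc nc (cycS (swap x y * σ))
      ≤ nc (EqvGen.setoid (fun a b => (cycS (swap x y * σ)) a b ∨ pr x y a b)) + 1 :=
        nc_le_succ _ x y
    _ ≤ nc (cycS σ) + 1 := by
        refine Nat.add_le_add_right (nc_le_of_le ?_) 1
        intro a b hab
        have : (swap x y * (swap x y * σ)).SameCycle a b := by rwa [hσ]
        exact sameCycle_swap_mul_le (swap x y * σ) x y a b this

lemma cyc_lt (σ : Perm (Fin d)) {x y : Fin d} (h : ¬ σ.SameCycle x y) :
    nc (cycS (swap x y * σ)) < nc (cycS σ) :=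
  nc_lt (fun a b hab => sameCycle_mono_of_not σ h hab)
    (sameCycle_swap_mul_of_not σ h) h

/-- edge relation of a list of permutations -/
def eRel (l : List (Perm (Fin d))) (a b : Fin d) : Prop := ∃ τ ∈ l, τ a = b

/-- the setoid generated by the edge relation -/
def eSet (l : List (Perm (Fin d))) : Setoid (Fin d) := EqvGen.setoid (eRel l)

lemma eSet_cons (x y : Fin d) (t : List (Perm (Fin d))) :
    eSet (swap x y :: t) = EqvGen.setoid (fun a b => (eSet t) a b ∨ pr x y a b) := by
  apply Setoid.ext
  intro a b
  constructor
  · intro h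
    refine eqvGen_le ?_ h
    rintro u v ⟨τ, hτ, rfl⟩
    rcases List.mem_cons.1 hτ with rfl | hm
    · by_cases hux : u = x
      · subst hux
        rw [swap_apply_left]
        exact EqvGen.rel _ _ (Or.inr (Or.inl ⟨rfl, rfl⟩))
      · by_cases huy : u = y
        · subst huy
          rw [swap_apply_right]
          exact EqvGen.rel _ _ (Or.inr (Or.inr ⟨rfl, rfl⟩))
        · rw [swap_apply_of_ne_of_ne hux huy]
          exact EqvGen.refl u
    · exact EqvGen.rel _ _ (Or.inl (EqvGen.rel _ _ ⟨τ, hm, rfl⟩))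
  · intro h
    refine eqvGen_le ?_ h
    rintro u v (h' | ⟨hu, hv⟩ | ⟨hu, hv⟩)
    · exact eqvGen_le (fun a b ⟨τ, hm, he⟩ =>
        EqvGen.rel _ _ ⟨τ, List.mem_cons_of_mem _ hm, he⟩) h'
    · rw [hu, hv]
      exact EqvGen.rel _ _ ⟨swap x y, List.mem_cons_self, swap_apply_left x y⟩
    · rw [hu, hv]
      exact EqvGen.rel _ _ ⟨swap x y, List.mem_cons_self, swap_apply_right x y⟩

lemma eSet_absorb {x y : Fin d} {t : List (Perm (Fin d))} (h : (eSet t) x y) :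
    EqvGen.setoid (fun a b => (eSet t) a b ∨ pr x y a b) = eSet t := by
  apply Setoid.ext
  intro a b
  constructor
  · intro hab
    refine eqvGen_le (p := eRel t) ?_ hab
    rintro u v (h' | ⟨rfl, rfl⟩ | ⟨rfl, rfl⟩)
    · exact h'
    · exact h
    · exact EqvGen.symm _ _ h
  · intro hab
    exact EqvGen.mono (fun u v huv => Or.inl (EqvGen.rel _ _ huv)) _ _ hab

lemma nc_eq_d {s : Setoid (Fin d)} (h : ∀ a b : Fin d, s a b → a = b) : nc s = d := by
  have hbij : Bijective (Quotient.mk s) := by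
    constructor
    · intro a b hab
      exact h a b (Quotient.exact hab)
    · intro q
      obtain ⟨a, rfl⟩ := q.exists_rep
      exact ⟨a, rfl⟩
  calc nc s = Nat.card (Fin d) := (Nat.card_eq_of_bijective _ hbij).symm
    _ = d := by simp

lemma eSet_nil_eq : ∀ a b : Fin d, (eSet ([] : List (Perm (Fin d)))) a b → a = b := by
  intro a b h
  induction h with
  | rel a b h' => obtain ⟨τ, hm, _⟩ := h'; simp at hm
  | refl a => rfl
  | symm a b _ ih => exact ih.symm
  | trans a b c _ _ ih1 ih2 => exact ih1.trans ih2

lemma main (l : List (Perm (Fin d))) (hsw : ∀ a ∈ l, a.IsSwap) :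
    (∀ a b : Fin d, l.prod.SameCycle a b → (eSet l) a b) ∧
      d + nc (cycS l.prod) ≤ l.length + 2 * nc (eSet l) := by
  induction l with
  | nil =>
    constructor
    · intro a b h
      rw [List.prod_nil, sameCycle_one] at h
      subst h
      exact (eSet ([] : List (Perm (Fin d)))).iseqv.refl a
    · rw [List.prod_nil, List.length_nil,
        nc_eq_d (fun a b h => Equiv.Perm.sameCycle_one.1 h), nc_eq_d eSet_nil_eq]
      omega
  | cons τ t ih =>
    obtain ⟨x, y, hxy, rfl⟩ := hsw τ (List.mem_cons_self)
    have hswt : ∀ a ∈ t, Equiv.Perm.IsSwap a := fun a ha => hsw a (List.mem_cons_of_mem _ ha)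
    obtain ⟨hinvt, hle⟩ := ih hswt
    rw [List.prod_cons]
    set σ' := t.prod with hσ'
    have hinv : ∀ a b : Fin d, (swap x y * σ').SameCycle a b → (eSet (swap x y :: t)) a b := by
      intro a b h
      have h1 := sameCycle_swap_mul_le σ' x y a b h
      rw [eSet_cons]
      show EqvGen _ a b
      refine eqvGen_le ?_ h1
      rintro u v (h' | hpr)
      · exact EqvGen.rel _ _ (Or.inl (hinvt u v h'))
      · exact EqvGen.rel _ _ (Or.inr hpr)
    refine ⟨hinv, ?_⟩
    by_cases hc : σ'.SameCycle x y
    · have hK : eSet (swap x y :: t) = eSet t := by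
        rw [eSet_cons]
        exact eSet_absorb (hinvt x y hc)
      have hc1 := cyc_le_succ σ' x y
      rw [hK, List.length_cons]
      omega
    · have hc2 := cyc_lt σ' hc
      have hK : nc (eSet t) ≤ nc (eSet (swap x y :: t)) + 1 := by
        rw [eSet_cons]
        exact nc_le_succ (eSet t) x y
      rw [List.length_cons]
      omega

end LGT

/-- If a tuple of transpositions in `S_d` generates a transitive subgroup and has
product the identity, then the tuple has at least `2(d-1)` entries. -/
theorem length_ge_of_transitive {d : ℕ} (hd : 2 ≤ d)
    (l : List (Equiv.Perm (Fin d))) (hswap : ∀ a ∈ l, a.IsSwap)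
    (hprod : l.prod = 1)
    (htrans : ∀ x y : Fin d, ∃ h ∈ Subgroup.closure {a | a ∈ l}, h x = y) :
    2 * (d - 1) ≤ l.length := by
  obtain ⟨-, hle⟩ := LGT.main l hswap
  rw [hprod] at hle
  rw [LGT.nc_eq_d (fun a b h => Equiv.Perm.sameCycle_one.1 h)] at hle
  have hall : ∀ a b : Fin d, (LGT.eSet l) a b := by
    have hmov : ∀ g ∈ Subgroup.closure {a | a ∈ l}, ∀ z : Fin d, (LGT.eSet l) z (g z) := by
      intro g hg
      induction hg using Subgroup.closure_induction with
      | mem τ hτ => exact fun z => Relation.EqvGen.rel _ _ ⟨τ, hτ, rfl⟩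
      | one => exact fun z => (LGT.eSet l).iseqv.refl z
      | mul g₁ g₂ h₁ h₂ ih₁ ih₂ =>
        intro z
        have := (LGT.eSet l).iseqv.trans (ih₂ z) (ih₁ (g₂ z))
        simpa using this
      | inv g hg ih =>
        intro z
        have := ih (g⁻¹ z)
        have h2 : g (g⁻¹ z) = z := by simp
        rw [h2] at this
        exact (LGT.eSet l).iseqv.symm this
    intro a b
    obtain ⟨h, hmem, hha⟩ := htrans a b
    have := hmov h hmem a
    rwa [hha] at this
  have hsub : Subsingleton (Quotient (LGT.eSet l)) := by
    constructor
    intro q1 q2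
    obtain ⟨a, rfl⟩ := q1.exists_rep
    obtain ⟨b, rfl⟩ := q2.exists_rep
    exact Quotient.sound (hall a b)
  have hK : LGT.nc (LGT.eSet l) ≤ 1 := Finite.card_le_one_iff_subsingleton.2 hsub
  set K := LGT.nc (LGT.eSet l)
  omega
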